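/- Let d ≥ 1 and n ≥ 1 and let μ be a partition of n into at most d parts. Then the soundness error of the permutation test on the Haar-twirled unequal input is exactly the inverse multinomial coefficient: Tr[Π_{(n)} · ρ_≠^μ] = 1/binom(n,μ) = μ₁!·μ₂!⋯μ_d!/n!. Equivalently, ⟨e_μ| Π_{(n)} |e_μ⟩ = μ₁!·μ₂!⋯μ_d!/n!. -/

import Mathlib

open MeasureTheory Matrix
open scoped ComplexOrder

noncomputable section

/-- The unitary group `U(d)`. -/
abbrev UG (d : ℕ) := Matrix.unitaryGroup (Fin d) ℂ

noncomputable instance (d : ℕ) : MeasurableSpace (UG d) := borel _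

instance (d : ℕ) : BorelSpace (UG d) := ⟨rfl⟩

/-- The permutation matrix `ψ(π)` on `(ℂ^d)^{⊗n}`, with `(x,y)` entry `1` iff `y = x ∘ π`. -/
def psi (d n : ℕ) (π : Equiv.Perm (Fin n)) : Matrix (Fin n → Fin d) (Fin n → Fin d) ℂ :=
  Matrix.of fun x y => if y = x ∘ π then 1 else 0

/-- The symmetrizer `Π_{(n)} = (1/n!) ∑_{π ∈ S_n} ψ(π)`. -/
def symmetrizer (d n : ℕ) : Matrix (Fin n → Fin d) (Fin n → Fin d) ℂ :=
  ((n.factorial : ℂ))⁻¹ • ∑ π : Equiv.Perm (Fin n), psi d n π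

/-- The `n`-fold tensor power of a `d × d` matrix. -/
def tpow (d n : ℕ) (U : Matrix (Fin d) (Fin d) ℂ) :
    Matrix (Fin n → Fin d) (Fin n → Fin d) ℂ :=
  Matrix.of fun x y => ∏ i, U (x i) (y i)

/-- The list consisting of `μ 0` copies of `0`, then `μ 1` copies of `1`, etc. -/
def wordList (d : ℕ) (μ : Fin d → ℕ) : List (Fin d) :=
  (List.ofFn fun i => List.replicate (μ i) i).flatten

lemma wordList_length (d : ℕ) (μ : Fin d → ℕ) : (wordList d μ).length = ∑ i, μ i := by
  simp [wordList, List.length_flatten, Function.comp, List.sum_ofFn]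

/-- The word indexing the basis vector `|e_μ⟩`: the first `μ 0` tensor factors carry the
first basis label, the next `μ 1` factors the second basis label, etc. -/
def word (d n : ℕ) (μ : Fin d → ℕ) (hsum : ∑ i, μ i = n) (j : Fin n) : Fin d :=
  (wordList d μ).get ⟨j, by rw [wordList_length, hsum]; exact j.isLt⟩

/-- The Haar-twirled state `ρ_≠^μ = ∫ U^{⊗n} |e_μ⟩⟨e_μ| (U^{⊗n})^† dU`
(entrywise Bochner integral). -/
def rhoNE (d n : ℕ) (μ : Fin d → ℕ) (hsum : ∑ i, μ i = n) (haar : Measure (UG d)) :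
    Matrix (Fin n → Fin d) (Fin n → Fin d) ℂ :=
  Matrix.of fun x y =>
    ∫ U : UG d, tpow d n (U : Matrix (Fin d) (Fin d) ℂ) x (word d n μ hsum) *
      star (tpow d n (U : Matrix (Fin d) (Fin d) ℂ) y (word d n μ hsum)) ∂haar

/-- The partition `(n, 0, …, 0)`. -/
def muEq (d n : ℕ) (hd : 0 < d) : Fin d → ℕ := fun i => if i = ⟨0, hd⟩ then n else 0

lemma muEq_sum (d n : ℕ) (hd : 0 < d) : ∑ i, muEq d n hd i = n := by
  simp [muEq]

/-- The state `ρ_=^n = ρ_≠^{(n,0,…,0)}`. -/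
def rhoEQ (d n : ℕ) (hd : 0 < d) (haar : Measure (UG d)) :
    Matrix (Fin n → Fin d) (Fin n → Fin d) ℂ :=
  rhoNE d n (muEq d n hd) (muEq_sum d n hd) haar

lemma psi_mul_tpow (d n : ℕ) (U : Matrix (Fin d) (Fin d) ℂ) (π : Equiv.Perm (Fin n)) :
    psi d n π * tpow d n U = tpow d n U * psi d n π := by
  ext x y
  have hcond : ∀ z : Fin n → Fin d, (y = z ∘ π) ↔ (z = y ∘ ⇑π⁻¹) := by
    intro z
    constructor
    · intro h; funext i
      have := congrFun h (π⁻¹ i)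
      simpa using this.symm
    · intro h; funext i; simp [h]
  simp only [Matrix.mul_apply, psi, tpow, Matrix.of_apply]
  have h1 : (∑ z : Fin n → Fin d, (if z = x ∘ π then (1:ℂ) else 0) * ∏ i, U (z i) (y i))
      = ∏ i, U ((x ∘ π) i) (y i) := by
    rw [Finset.sum_eq_single (x ∘ π)]
    · simp
    · intro b _ hb; simp [hb]
    · simp
  have h2 : (∑ z : Fin n → Fin d, (∏ i, U (x i) (z i)) * (if y = z ∘ π then (1:ℂ) else 0))
      = ∏ i, U (x i) ((y ∘ ⇑π⁻¹) i) := by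
    simp only [hcond]
    rw [Finset.sum_eq_single (y ∘ ⇑π⁻¹)]
    · simp
    · intro b _ hb; rw [if_neg hb, mul_zero]
    · simp
  rw [h1, h2]
  rw [← Equiv.prod_comp π fun i => U (x i) ((y ∘ ⇑π⁻¹) i)]
  simp

lemma symmetrizer_mul_tpow (d n : ℕ) (U : Matrix (Fin d) (Fin d) ℂ) :
    symmetrizer d n * tpow d n U = tpow d n U * symmetrizer d n := by
  simp only [symmetrizer, Matrix.smul_mul, Matrix.mul_smul, Finset.sum_mul, Finset.mul_sum]
  congr 1
  exact Finset.sum_congr rfl fun π _ => psi_mul_tpow d n U π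

lemma tpow_conjTranspose_mul (d n : ℕ) (U : UG d) :
    (tpow d n (U : Matrix (Fin d) (Fin d) ℂ))ᴴ * tpow d n (U : Matrix (Fin d) (Fin d) ℂ) = 1 := by
  have hU : star (U : Matrix (Fin d) (Fin d) ℂ) * (U : Matrix (Fin d) (Fin d) ℂ) = 1 := U.2.1
  ext x y
  simp only [Matrix.mul_apply, Matrix.conjTranspose_apply, tpow, Matrix.of_apply]
  calc (∑ z : Fin n → Fin d, star (∏ i, (U : Matrix (Fin d) (Fin d) ℂ) (z i) (x i)) *
          ∏ i, (U : Matrix (Fin d) (Fin d) ℂ) (z i) (y i))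
      = ∑ z : Fin n → Fin d, ∏ i,
          (star ((U : Matrix (Fin d) (Fin d) ℂ) (z i) (x i)) *
            (U : Matrix (Fin d) (Fin d) ℂ) (z i) (y i)) := by
        refine Finset.sum_congr rfl fun z _ => ?_
        rw [star_prod, ← Finset.prod_mul_distrib]
    _ = ∏ i, ∑ k : Fin d, star ((U : Matrix (Fin d) (Fin d) ℂ) k (x i)) *
          (U : Matrix (Fin d) (Fin d) ℂ) k (y i) := by
        rw [Finset.prod_univ_sum]
        rw [← Fintype.piFinset_univ]
    _ = ∏ i, (1 : Matrix (Fin d) (Fin d) ℂ) (x i) (y i) := by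
        refine Finset.prod_congr rfl fun i _ => ?_
        rw [← hU]
        simp [Matrix.mul_apply, Matrix.conjTranspose_apply, mul_comm]
    _ = (1 : Matrix (Fin n → Fin d) (Fin n → Fin d) ℂ) x y := by
        by_cases hxy : x = y
        · simp [hxy, Matrix.one_apply]
        · obtain ⟨i, hi⟩ := Function.ne_iff.mp hxy
          rw [Finset.prod_eq_zero (Finset.mem_univ i)]
          · simp [Matrix.one_apply, hxy]
          · simp [Matrix.one_apply, hi]

lemma conj_symmetrizer (d n : ℕ) (U : UG d) :
    (tpow d n (U : Matrix (Fin d) (Fin d) ℂ))ᴴ * symmetrizer d n *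
      tpow d n (U : Matrix (Fin d) (Fin d) ℂ) = symmetrizer d n := by
  rw [Matrix.mul_assoc, symmetrizer_mul_tpow, ← Matrix.mul_assoc,
    tpow_conjTranspose_mul, Matrix.one_mul]

lemma list_fiber_card {d : ℕ} (l : List (Fin d)) (a : Fin d) :
    Fintype.card {j : Fin l.length // l.get j = a} = l.count a := by
  induction l with
  | nil => simp
  | cons b t ih =>
    rw [Fintype.card_subtype] at *
    rw [Finset.card_filter] at *
    show (∑ i : Fin (t.length + 1), if (b :: t).get i = a then 1 else 0) = _
    rw [Fin.sum_univ_succ, List.count_cons]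
    simp only [show ∀ i : Fin t.length, (b :: t).get i.succ = t.get i from fun _ => rfl]
    rw [ih]
    have h0 : (b :: t).get ⟨0, Nat.succ_pos _⟩ = b := rfl
    rw [add_comm]
    simp [h0, beq_iff_eq]
    split_ifs <;> simp_all

lemma wordList_count (d : ℕ) (μ : Fin d → ℕ) (a : Fin d) :
    (wordList d μ).count a = μ a := by
  simp only [wordList, List.count_flatten, List.map_ofFn, List.sum_ofFn]
  simp only [List.count_replicate, beq_iff_eq, Function.comp_apply]
  simp [Finset.sum_ite_eq']

lemma word_fiber_card (d n : ℕ) (μ : Fin d → ℕ) (hsum : ∑ i, μ i = n) (a : Fin d) :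
    Fintype.card {j : Fin n // word d n μ hsum j = a} = μ a := by
  have hlen : (wordList d μ).length = n := by rw [wordList_length, hsum]
  have e : {j : Fin n // word d n μ hsum j = a} ≃
      {j : Fin (wordList d μ).length // (wordList d μ).get j = a} :=
    Equiv.subtypeEquiv (finCongr hlen.symm) (fun j => Iff.rfl)
  rw [Fintype.card_congr e, list_fiber_card, wordList_count]

lemma stab_card (d n : ℕ) (μ : Fin d → ℕ) (hsum : ∑ i, μ i = n) :
    Fintype.card {π : Equiv.Perm (Fin n) // word d n μ hsum ∘ π = word d n μ hsum}
      = ∏ i, (μ i).factorial := by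
  rw [DomMulAct.stabilizer_card]
  exact Finset.prod_congr rfl fun i _ => by rw [word_fiber_card]

lemma tpow_norm_le_one (d n : ℕ) (U : UG d) (p q : Fin n → Fin d) :
    ‖tpow d n (U : Matrix (Fin d) (Fin d) ℂ) p q‖ ≤ 1 := by
  simp only [tpow, Matrix.of_apply]
  calc ‖∏ i, (U : Matrix (Fin d) (Fin d) ℂ) (p i) (q i)‖
      = ∏ i, ‖(U : Matrix (Fin d) (Fin d) ℂ) (p i) (q i)‖ := norm_prod _ _
    _ ≤ ∏ i : Fin n, 1 := Finset.prod_le_prod (fun _ _ => norm_nonneg _)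
        (fun i _ => entry_norm_bound_of_unitary U.2 _ _)
    _ = 1 := by simp

lemma integrable_entry (d n : ℕ) (haar : Measure (UG d)) [IsProbabilityMeasure haar]
    (c : ℂ) (x y w : Fin n → Fin d) :
    Integrable (fun U : UG d =>
      c * (tpow d n (U : Matrix (Fin d) (Fin d) ℂ) y w *
        star (tpow d n (U : Matrix (Fin d) (Fin d) ℂ) x w))) haar := by
  have hcoe : Continuous fun U : UG d => (U : Matrix (Fin d) (Fin d) ℂ) :=
    continuous_subtype_val
  have hent : ∀ p q : Fin n → Fin d,
      Continuous fun U : UG d => tpow d n (U : Matrix (Fin d) (Fin d) ℂ) p q := by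
    intro p q
    simp only [tpow, Matrix.of_apply]
    exact continuous_finset_prod _ fun i _ =>
      (continuous_apply (q i)).comp ((continuous_apply (p i)).comp hcoe)
  have hcont : Continuous fun U : UG d =>
      c * (tpow d n (U : Matrix (Fin d) (Fin d) ℂ) y w *
        star (tpow d n (U : Matrix (Fin d) (Fin d) ℂ) x w)) :=
    continuous_const.mul ((hent y w).mul (hent x w).star)
  refine (integrable_const ‖c‖).mono' hcont.aestronglyMeasurable (ae_of_all _ fun U => ?_)
  have h1 := tpow_norm_le_one d n U y w
  have h2 := tpow_norm_le_one d n U x w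
  have h1' := norm_nonneg (tpow d n (U : Matrix (Fin d) (Fin d) ℂ) y w)
  have h2' := norm_nonneg (tpow d n (U : Matrix (Fin d) (Fin d) ℂ) x w)
  rw [norm_mul, norm_mul, norm_star]
  have hab : ‖tpow d n (U : Matrix (Fin d) (Fin d) ℂ) y w‖ *
      ‖tpow d n (U : Matrix (Fin d) (Fin d) ℂ) x w‖ ≤ 1 := by
    nlinarith
  nlinarith [norm_nonneg c]

/-- The soundness error of the permutation test on the Haar-twirled
unequal input is exactly the inverse multinomial coefficient. -/
theorem permutation_test_soundness_error (d n : ℕ) (hd : 1 ≤ d) (hn : 1 ≤ n)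
    (μ : Fin d → ℕ) (hmono : ∀ i j : Fin d, i ≤ j → μ j ≤ μ i) (hsum : ∑ i, μ i = n)
    (haar : Measure (UG d)) [IsProbabilityMeasure haar]
    (hinv : ∀ V : UG d, Measure.map (fun U => V * U) haar = haar) :
    Matrix.trace (symmetrizer d n * rhoNE d n μ hsum haar)
        = ((Nat.multinomial Finset.univ μ : ℂ))⁻¹ ∧
    ((Nat.multinomial Finset.univ μ : ℂ))⁻¹
        = (∏ i, ((μ i).factorial : ℂ)) / (n.factorial : ℂ) ∧
    symmetrizer d n (word d n μ hsum) (word d n μ hsum)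
        = (∏ i, ((μ i).factorial : ℂ)) / (n.factorial : ℂ) := by
  classical
  set w := word d n μ hsum with hw
  -- the diagonal entry of the symmetrizer
  have hdiag : symmetrizer d n w w = (∏ i, ((μ i).factorial : ℂ)) / (n.factorial : ℂ) := by
    have hsum_boole : (∑ π : Equiv.Perm (Fin n), psi d n π w w)
        = (((Finset.univ.filter fun π : Equiv.Perm (Fin n) => w ∘ π = w).card : ℕ) : ℂ) := by
      rw [Finset.card_filter]
      push_cast
      refine Finset.sum_congr rfl fun π _ => ?_
      simp only [psi, Matrix.of_apply]
      exact if_congr eq_comm rfl rfl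
    have hcard : (Finset.univ.filter fun π : Equiv.Perm (Fin n) => w ∘ π = w).card
        = ∏ i, (μ i).factorial := by
      rw [← stab_card d n μ hsum, Fintype.card_subtype]
    simp only [symmetrizer, Matrix.smul_apply, Matrix.sum_apply, smul_eq_mul]
    rw [hsum_boole, hcard]
    push_cast
    rw [inv_mul_eq_div]
  -- the multinomial identity
  have hspec : (∏ i, (μ i).factorial) * Nat.multinomial Finset.univ μ = n.factorial := by
    have h := Nat.multinomial_spec (s := Finset.univ) (f := μ)
    rwa [hsum] at h
  have hM0 : (Nat.multinomial Finset.univ μ : ℂ) ≠ 0 :=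
    Nat.cast_ne_zero.mpr (Nat.multinomial_pos _ _).ne'
  have hF0 : ((n.factorial : ℂ)) ≠ 0 := Nat.cast_ne_zero.mpr n.factorial_ne_zero
  have h2 : ((Nat.multinomial Finset.univ μ : ℂ))⁻¹
      = (∏ i, ((μ i).factorial : ℂ)) / (n.factorial : ℂ) := by
    have hspecC : (∏ i, ((μ i).factorial : ℂ)) * (Nat.multinomial Finset.univ μ : ℂ)
        = (n.factorial : ℂ) := by exact_mod_cast congrArg (Nat.cast : ℕ → ℂ) hspec
    field_simp
    linear_combination -hspecC
  -- the trace computation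
  have hkey : ∀ U : UG d,
      (∑ x : Fin n → Fin d, ∑ y : Fin n → Fin d, symmetrizer d n x y *
        (tpow d n (U : Matrix (Fin d) (Fin d) ℂ) y w *
          star (tpow d n (U : Matrix (Fin d) (Fin d) ℂ) x w))) = symmetrizer d n w w := by
    intro U
    calc (∑ x : Fin n → Fin d, ∑ y : Fin n → Fin d, symmetrizer d n x y *
            (tpow d n (U : Matrix (Fin d) (Fin d) ℂ) y w *
              star (tpow d n (U : Matrix (Fin d) (Fin d) ℂ) x w)))
        = ((tpow d n (U : Matrix (Fin d) (Fin d) ℂ))ᴴ * symmetrizer d n *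
            tpow d n (U : Matrix (Fin d) (Fin d) ℂ)) w w := by
          simp only [Matrix.mul_apply, Matrix.conjTranspose_apply, Finset.sum_mul]
          rw [Finset.sum_comm]
          exact Finset.sum_congr rfl fun x _ => Finset.sum_congr rfl fun y _ => by ring
      _ = symmetrizer d n w w := by rw [conj_symmetrizer]
  have htr : Matrix.trace (symmetrizer d n * rhoNE d n μ hsum haar) = symmetrizer d n w w := by
    calc Matrix.trace (symmetrizer d n * rhoNE d n μ hsum haar)
        = ∑ x : Fin n → Fin d, ∑ y : Fin n → Fin d,
            symmetrizer d n x y * rhoNE d n μ hsum haar y x := by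
          simp [Matrix.trace, Matrix.diag, Matrix.mul_apply]
      _ = ∑ x : Fin n → Fin d, ∑ y : Fin n → Fin d,
            ∫ U : UG d, symmetrizer d n x y *
              (tpow d n (U : Matrix (Fin d) (Fin d) ℂ) y w *
                star (tpow d n (U : Matrix (Fin d) (Fin d) ℂ) x w)) ∂haar := by
          refine Finset.sum_congr rfl fun x _ => Finset.sum_congr rfl fun y _ => ?_
          simp only [rhoNE, Matrix.of_apply, ← hw]
          exact (integral_const_mul _ _).symm
      _ = ∫ U : UG d, ∑ x : Fin n → Fin d, ∑ y : Fin n → Fin d,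
            symmetrizer d n x y *
              (tpow d n (U : Matrix (Fin d) (Fin d) ℂ) y w *
                star (tpow d n (U : Matrix (Fin d) (Fin d) ℂ) x w)) ∂haar := by
          rw [integral_finset_sum _ fun x _ =>
            integrable_finset_sum _ fun y _ => integrable_entry d n haar (symmetrizer d n x y) x y w]
          refine Finset.sum_congr rfl fun x _ => ?_
          exact (integral_finset_sum _ fun y _ => integrable_entry d n haar (symmetrizer d n x y) x y w).symm
      _ = ∫ _U : UG d, symmetrizer d n w w ∂haar :=
          integral_congr_ae (Filter.Eventually.of_forall hkey)
      _ = symmetrizer d n w w := by simp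
  exact ⟨by rw [htr, hdiag, h2], h2, hdiag⟩

end
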